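/- arXiv:1907.12692 — 11 statements merged into one kernel-verified Lean document; each statement's English description precedes it below -/
import Mathlib

section
/- Let t, q, α, β, γ, δ, ε ∈ ℂ with t ≠ 0, t ≠ 1 and 1 + α + β = γ + δ + ε, and let U ⊆ ℂ be an open set disjoint from {0, 1, t}. Suppose u : ℂ → ℂ is holomorphic on U and satisfies the general Heun equation u''(z) + (γ/z + δ/(z−1) + ε/(z−t)) u'(z) + ((α·β·z − q)/(z(z−1)(z−t))) u(z) = 0 for all z ∈ U. Then the derivative v := u' satisfies, at every z ∈ U with α·β·z ≠ q, the second-order equation v''(z) + ((γ+1)/z + (δ+1)/(z−1) + (ε+1)/(z−t) − αβ/(αβ·z − q)) v'(z) + (f(z)/(z(z−1)(z−t)(αβ·z − q))) v(z) = 0, where f(z) = z(αβ·z − 2q)(αβ + γ + δ + ε) + (q² + q(γ + t(γ+δ) + ε) − αβγt). -/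
/-- The derivative of a general Heun function satisfies a second-order Fuchsian
equation with an additional singularity at `z = q/(αβ)`. -/
theorem derivative_of_general_Heun
    (t q α β γ δ ε : ℂ) (ht0 : t ≠ 0) (ht1 : t ≠ 1)
    (hFuchs : 1 + α + β = γ + δ + ε)
    (U : Set ℂ) (hU : IsOpen U)
    (hU0 : (0 : ℂ) ∉ U) (hU1 : (1 : ℂ) ∉ U) (hUt : t ∉ U)
    (u : ℂ → ℂ) (hu : DifferentiableOn ℂ u U)
    (hode : ∀ z ∈ U,
      deriv (deriv u) z
        + (γ / z + δ / (z - 1) + ε / (z - t)) * deriv u z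
        + ((α * β * z - q) / (z * (z - 1) * (z - t))) * u z = 0) :
    ∀ z ∈ U, α * β * z ≠ q →
      deriv (deriv (deriv u)) z
        + ((γ + 1) / z + (δ + 1) / (z - 1) + (ε + 1) / (z - t)
            - α * β / (α * β * z - q)) * deriv (deriv u) z
        + ((z * (α * β * z - 2 * q) * (α * β + γ + δ + ε)
            + (q ^ 2 + q * (γ + t * (γ + δ) + ε) - α * β * γ * t))
            / (z * (z - 1) * (z - t) * (α * β * z - q))) * deriv u z = 0 := by
  have hε : ε = 1 + α + β - γ - δ := by linear_combination -hFuchs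
  subst hε
  have hAn : AnalyticOnNhd ℂ u U := hu.analyticOnNhd hU
  have hAn1 : AnalyticOnNhd ℂ (deriv u) U := hAn.deriv
  have hAn2 : AnalyticOnNhd ℂ (deriv (deriv u)) U := hAn1.deriv
  -- the ODE in polynomial form
  have hpoly : ∀ w ∈ U,
      deriv (deriv u) w * (w * (w - 1) * (w - t))
        + (γ * (w - 1) * (w - t) + δ * (w * (w - t))
            + (1 + α + β - γ - δ) * (w * (w - 1))) * deriv u w
        + (α * β * w - q) * u w = 0 := by
    intro w hw
    have hw0 : w ≠ 0 := fun h => hU0 (h ▸ hw)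
    have hw1 : w - 1 ≠ 0 := sub_ne_zero.mpr (fun h => hU1 (h ▸ hw))
    have hwt : w - t ≠ 0 := sub_ne_zero.mpr (fun h => hUt (h ▸ hw))
    have h := hode w hw
    field_simp at h
    linear_combination h
  intro z hz hNq
  have hz0 : z ≠ 0 := fun h => hU0 (h ▸ hz)
  have hz1 : z - 1 ≠ 0 := sub_ne_zero.mpr (fun h => hU1 (h ▸ hz))
  have hzt : z - t ≠ 0 := sub_ne_zero.mpr (fun h => hUt (h ▸ hz))
  have hN : α * β * z - q ≠ 0 := sub_ne_zero.mpr hNq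
  have hD : z * (z - 1) * (z - t) ≠ 0 := mul_ne_zero (mul_ne_zero hz0 hz1) hzt
  have hdu : HasDerivAt u (deriv u z) z := (hAn z hz).differentiableAt.hasDerivAt
  have hdu1 : HasDerivAt (deriv u) (deriv (deriv u) z) z :=
    (hAn1 z hz).differentiableAt.hasDerivAt
  have hdu2 : HasDerivAt (deriv (deriv u)) (deriv (deriv (deriv u)) z) z :=
    (hAn2 z hz).differentiableAt.hasDerivAt
  have e1 : HasDerivAt (fun w : ℂ => w) 1 z := hasDerivAt_id z
  have e2 : HasDerivAt (fun w : ℂ => w - 1) 1 z := e1.sub_const 1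
  have e3 : HasDerivAt (fun w : ℂ => w - t) 1 z := e1.sub_const t
  have eD : HasDerivAt (fun w : ℂ => w * (w - 1) * (w - t))
      ((1 * (z - 1) + z * 1) * (z - t) + z * (z - 1) * 1) z := (e1.mul e2).mul e3
  have eN : HasDerivAt (fun w : ℂ => α * β * w - q) (α * β * 1) z :=
    (e1.const_mul (α * β)).sub_const q
  have ePD : HasDerivAt (fun w : ℂ => γ * (w - 1) * (w - t) + δ * (w * (w - t))
        + (1 + α + β - γ - δ) * (w * (w - 1)))
      ((γ * 1) * (z - t) + γ * (z - 1) * 1 + δ * (1 * (z - t) + z * 1)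
        + (1 + α + β - γ - δ) * (1 * (z - 1) + z * 1)) z :=
    ((((e2.const_mul γ).mul e3).add ((e1.mul e3).const_mul δ)).add
      ((e1.mul e2).const_mul (1 + α + β - γ - δ)))
  have hF : HasDerivAt (fun w => deriv (deriv u) w * (w * (w - 1) * (w - t))
        + (γ * (w - 1) * (w - t) + δ * (w * (w - t))
            + (1 + α + β - γ - δ) * (w * (w - 1))) * deriv u w
        + (α * β * w - q) * u w)
      ((deriv (deriv (deriv u)) z * (z * (z - 1) * (z - t))
          + deriv (deriv u) z * ((1 * (z - 1) + z * 1) * (z - t) + z * (z - 1) * 1))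
        + (((γ * 1) * (z - t) + γ * (z - 1) * 1 + δ * (1 * (z - t) + z * 1)
              + (1 + α + β - γ - δ) * (1 * (z - 1) + z * 1)) * deriv u z
            + (γ * (z - 1) * (z - t) + δ * (z * (z - t))
                + (1 + α + β - γ - δ) * (z * (z - 1))) * deriv (deriv u) z)
        + (α * β * 1 * u z + (α * β * z - q) * deriv u z)) z :=
    ((hdu2.mul eD).add (ePD.mul hdu1)).add (eN.mul hdu)
  have heq : (fun w => deriv (deriv u) w * (w * (w - 1) * (w - t))
        + (γ * (w - 1) * (w - t) + δ * (w * (w - t))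
            + (1 + α + β - γ - δ) * (w * (w - 1))) * deriv u w
        + (α * β * w - q) * u w) =ᶠ[nhds z] (fun _ => (0 : ℂ)) := by
    filter_upwards [hU.mem_nhds hz] with w hw using hpoly w hw
  have h1p : (deriv (deriv (deriv u)) z * (z * (z - 1) * (z - t))
          + deriv (deriv u) z * ((1 * (z - 1) + z * 1) * (z - t) + z * (z - 1) * 1))
        + (((γ * 1) * (z - t) + γ * (z - 1) * 1 + δ * (1 * (z - t) + z * 1)
              + (1 + α + β - γ - δ) * (1 * (z - 1) + z * 1)) * deriv u z
            + (γ * (z - 1) * (z - t) + δ * (z * (z - t))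
                + (1 + α + β - γ - δ) * (z * (z - 1))) * deriv (deriv u) z)
        + (α * β * 1 * u z + (α * β * z - q) * deriv u z) = 0 := by
    rw [← hF.deriv, heq.deriv_eq]
    simp
  have h0p := hpoly z hz
  have hN' : z * α * β - q ≠ 0 := by rw [show z * α * β = α * β * z by ring]; exact hN
  field_simp
  linear_combination (α * β * z - q) * h1p - (α * β) * h0p
end

section
/- Let q, α, γ, δ, ε ∈ ℂ and let U ⊆ ℂ be an open set disjoint from {0, 1}. Suppose u : ℂ → ℂ is holomorphic on U and satisfies the confluent Heun equation u''(z) + (γ/z + δ/(z−1) + ε) u'(z) + ((α·z − q)/(z(z−1))) u(z) = 0 for all z ∈ U. Then v := u' satisfies, at every z ∈ U with α·z ≠ q, v''(z) + ((γ+1)/z + (δ+1)/(z−1) + ε − α/(α·z − q)) v'(z) + (g(z)/(z(z−1)(α·z − q))) v(z) = 0, where g(z) = (α + ε)(α·z² − 2q·z) + (q² − (γ + δ − ε)q + αγ). -/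
set_option maxHeartbeats 1600000

/-- The derivative of a confluent Heun function satisfies a second-order
equation with an additional singularity at `z = q/α`. -/
theorem derivative_of_confluent_Heun
    (q α γ δ ε : ℂ)
    (U : Set ℂ) (hU : IsOpen U)
    (hU0 : (0 : ℂ) ∉ U) (hU1 : (1 : ℂ) ∉ U)
    (u : ℂ → ℂ) (hu : DifferentiableOn ℂ u U)
    (hode : ∀ z ∈ U,
      deriv (deriv u) z
        + (γ / z + δ / (z - 1) + ε) * deriv u z
        + ((α * z - q) / (z * (z - 1))) * u z = 0) :
    ∀ z ∈ U, α * z ≠ q →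
      deriv (deriv (deriv u)) z
        + ((γ + 1) / z + (δ + 1) / (z - 1) + ε - α / (α * z - q)) * deriv (deriv u) z
        + (((α + ε) * (α * z ^ 2 - 2 * q * z) + (q ^ 2 - (γ + δ - ε) * q + α * γ))
            / (z * (z - 1) * (α * z - q))) * deriv u z = 0 := by
  intro z hz hq
  have hz0 : z ≠ 0 := fun h => hU0 (h ▸ hz)
  have hz1 : z - 1 ≠ 0 := sub_ne_zero.mpr (fun h => hU1 (h ▸ hz))
  have hq' : α * z - q ≠ 0 := sub_ne_zero.mpr hq
  -- analyticity
  have hA : AnalyticOnNhd ℂ u U := hu.analyticOnNhd hU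
  have hA1 : AnalyticOnNhd ℂ (deriv u) U := hA.deriv
  have hA2 : AnalyticOnNhd ℂ (deriv (deriv u)) U := hA1.deriv
  have h1 : HasDerivAt u (deriv u z) z := ((hA z hz).differentiableAt).hasDerivAt
  have h2 : HasDerivAt (deriv u) (deriv (deriv u) z) z :=
    ((hA1 z hz).differentiableAt).hasDerivAt
  have h3 : HasDerivAt (deriv (deriv u)) (deriv (deriv (deriv u)) z) z :=
    ((hA2 z hz).differentiableAt).hasDerivAt
  set a := u z
  set b := deriv u z
  set c := deriv (deriv u) z
  set d := deriv (deriv (deriv u)) z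
  -- derivatives of the coefficient functions
  have hP : HasDerivAt (fun w : ℂ => γ / w + δ / (w - 1) + ε)
      (-(γ / z ^ 2) - δ / (z - 1) ^ 2) z := by
    have h := (((hasDerivAt_const z γ).div (hasDerivAt_id z) hz0).add
      (((hasDerivAt_const z δ).div ((hasDerivAt_id z).sub_const 1) hz1))).add_const ε
    refine h.congr_deriv ?_
    simp only [id_eq]
    field_simp
    ring
  have hQ : HasDerivAt (fun w : ℂ => (α * w - q) / (w * (w - 1)))
      ((α * (z * (z - 1)) - (α * z - q) * (2 * z - 1)) / (z ^ 2 * (z - 1) ^ 2)) z := by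
    have h := (((hasDerivAt_id z).const_mul α).sub_const q).div
      ((hasDerivAt_id z).mul ((hasDerivAt_id z).sub_const 1)) (mul_ne_zero hz0 hz1)
    refine h.congr_deriv ?_
    simp only [id_eq, Pi.mul_apply]
    field_simp
    ring
  -- differentiate the ODE
  have hH : HasDerivAt (fun w : ℂ =>
      deriv (deriv u) w + (γ / w + δ / (w - 1) + ε) * deriv u w
        + ((α * w - q) / (w * (w - 1))) * u w)
      (d + ((-(γ / z ^ 2) - δ / (z - 1) ^ 2) * b + (γ / z + δ / (z - 1) + ε) * c)
        + (((α * (z * (z - 1)) - (α * z - q) * (2 * z - 1)) / (z ^ 2 * (z - 1) ^ 2)) * a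
          + ((α * z - q) / (z * (z - 1))) * b)) z :=
    (h3.add (hP.mul h2)).add (hQ.mul h1)
  have hzero : (fun w : ℂ =>
      deriv (deriv u) w + (γ / w + δ / (w - 1) + ε) * deriv u w
        + ((α * w - q) / (w * (w - 1))) * u w) =ᶠ[nhds z] (fun _ => (0 : ℂ)) :=
    Filter.eventually_of_mem (hU.mem_nhds hz) (fun w hw => hode w hw)
  have hE1 : d + ((-(γ / z ^ 2) - δ / (z - 1) ^ 2) * b + (γ / z + δ / (z - 1) + ε) * c)
        + (((α * (z * (z - 1)) - (α * z - q) * (2 * z - 1)) / (z ^ 2 * (z - 1) ^ 2)) * a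
          + ((α * z - q) / (z * (z - 1))) * b) = 0 := by
    rw [← hH.deriv, hzero.deriv_eq]
    simp
  have hE0 : c + (γ / z + δ / (z - 1) + ε) * b + ((α * z - q) / (z * (z - 1))) * a = 0 :=
    hode z hz
  field_simp at hE0 hE1
  have hM : z ^ 3 * (z - 1) ^ 3 * (α * z - q) ≠ 0 :=
    mul_ne_zero (mul_ne_zero (pow_ne_zero _ hz0) (pow_ne_zero _ hz1)) hq'
  have expand : (d + ((γ + 1) / z + (δ + 1) / (z - 1) + ε - α / (α * z - q)) * c
        + (((α + ε) * (α * z ^ 2 - 2 * q * z) + (q ^ 2 - (γ + δ - ε) * q + α * γ))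
            / (z * (z - 1) * (α * z - q))) * b) * (z ^ 3 * (z - 1) ^ 3 * (α * z - q))
    = (α * z - q) * (d * (z ^ 2 * (z - 1) ^ 2 * (z * (z - 1))) +
        ((-(γ * (z - 1) ^ 2) - z ^ 2 * δ) * b * (z * (z - 1)) +
          (γ * (z - 1) + δ * z + ε * (z * (z - 1))) * c * (z ^ 2 * (z - 1) ^ 2)) +
      ((α * (z * (z - 1)) - (α * z - q) * (2 * z - 1)) * a * (z * (z - 1))
          + (α * z - q) * b * (z ^ 2 * (z - 1) ^ 2)))
      - (α * (z * (z - 1)) - (α * z - q) * (2 * z - 1)) * (z * (z - 1)) *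
        (c * (z * (z - 1)) + (γ * (z - 1) + δ * z + ε * (z * (z - 1))) * b + (α * z - q) * a) := by
    have hq'' : z * α - q ≠ 0 := by rwa [mul_comm]
    field_simp
    ring
  have hprod : (d + ((γ + 1) / z + (δ + 1) / (z - 1) + ε - α / (α * z - q)) * c
        + (((α + ε) * (α * z ^ 2 - 2 * q * z) + (q ^ 2 - (γ + δ - ε) * q + α * γ))
            / (z * (z - 1) * (α * z - q))) * b) * (z ^ 3 * (z - 1) ^ 3 * (α * z - q)) = 0 := by
    rw [expand]
    linear_combination (α * z - q) * (z * (z - 1)) * hE1 - (α * (z * (z - 1)) - (α * z - q) * (2 * z - 1)) * (z * (z - 1)) * hE0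
  exact (mul_eq_zero.mp hprod).resolve_right hM
end

section
/- Let q, α, γ, δ, ε ∈ ℂ and let U ⊆ ℂ be an open set with 0 ∉ U. Suppose u : ℂ → ℂ is holomorphic on U and satisfies the bi-confluent Heun equation u''(z) + (γ/z + δ + ε·z) u'(z) + ((α·z − q)/z) u(z) = 0 for all z ∈ U. Then v := u' satisfies, at every z ∈ U with α·z ≠ q, v''(z) + ((γ+1)/z + δ + ε·z − α/(α·z − q)) v'(z) + (k(z)/(z(α·z − q))) v(z) = 0, where k(z) = (α + ε)·z·(α·z − 2q) + (q² − δq − αγ). -/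
/-- The derivative of a bi-confluent Heun function satisfies a second-order
equation with an additional singularity at `z = q/α`. -/
theorem derivative_of_bi_confluent_Heun
    (q α γ δ ε : ℂ)
    (U : Set ℂ) (hU : IsOpen U) (hU0 : (0 : ℂ) ∉ U)
    (u : ℂ → ℂ) (hu : DifferentiableOn ℂ u U)
    (hode : ∀ z ∈ U,
      deriv (deriv u) z
        + (γ / z + δ + ε * z) * deriv u z
        + ((α * z - q) / z) * u z = 0) :
    ∀ z ∈ U, α * z ≠ q →
      deriv (deriv (deriv u)) z
        + ((γ + 1) / z + δ + ε * z - α / (α * z - q)) * deriv (deriv u) z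
        + (((α + ε) * z * (α * z - 2 * q) + (q ^ 2 - δ * q - α * γ))
            / (z * (α * z - q))) * deriv u z = 0 := by
  intro z hz hαz
  have hz0 : z ≠ 0 := fun h => hU0 (h ▸ hz)
  have haz : α * z - q ≠ 0 := sub_ne_zero.mpr hαz
  have han : AnalyticOnNhd ℂ u U := hu.analyticOnNhd hU
  have han1 : AnalyticOnNhd ℂ (deriv u) U := han.deriv
  have han2 : AnalyticOnNhd ℂ (deriv (deriv u)) U := han1.deriv
  have hu1 : HasDerivAt u (deriv u z) z := (han z hz).differentiableAt.hasDerivAt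
  have hu2 : HasDerivAt (deriv u) (deriv (deriv u) z) z :=
    (han1 z hz).differentiableAt.hasDerivAt
  have hu3 : HasDerivAt (deriv (deriv u)) (deriv (deriv (deriv u)) z) z :=
    (han2 z hz).differentiableAt.hasDerivAt
  have hA : HasDerivAt (fun w : ℂ => γ / w + δ + ε * w)
      ((0 * z - γ * 1) / z ^ 2 + ε * 1) z :=
    (((hasDerivAt_const z γ).div (hasDerivAt_id z) hz0).add_const δ).add
      ((hasDerivAt_id z).const_mul ε)
  have hB : HasDerivAt (fun w : ℂ => (α * w - q) / w)
      ((α * 1 * z - (α * z - q) * 1) / z ^ 2) z :=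
    (((hasDerivAt_id z).const_mul α).sub_const q).div (hasDerivAt_id z) hz0
  have hF : HasDerivAt (fun w => deriv (deriv u) w
      + (γ / w + δ + ε * w) * deriv u w + ((α * w - q) / w) * u w)
      (deriv (deriv (deriv u)) z
        + (((0 * z - γ * 1) / z ^ 2 + ε * 1) * deriv u z
            + (γ / z + δ + ε * z) * deriv (deriv u) z)
        + (((α * 1 * z - (α * z - q) * 1) / z ^ 2) * u z
            + ((α * z - q) / z) * deriv u z)) z :=
    (hu3.add (hA.mul hu2)).add (hB.mul hu1)
  have heq : (fun w => deriv (deriv u) w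
      + (γ / w + δ + ε * w) * deriv u w + ((α * w - q) / w) * u w)
      =ᶠ[nhds z] fun _ => (0 : ℂ) := by
    filter_upwards [hU.mem_nhds hz] with w hw using hode w hw
  have hF0 : HasDerivAt (fun w => deriv (deriv u) w
      + (γ / w + δ + ε * w) * deriv u w + ((α * w - q) / w) * u w) 0 z :=
    (hasDerivAt_const z (0 : ℂ)).congr_of_eventuallyEq heq
  have key := hF.unique hF0
  have hz' := hode z hz
  field_simp at key hz'
  have hpoly : z ^ 3 * (α * z - q) * deriv (deriv (deriv u)) z
      + (z ^ 2 * ((γ + δ * z + ε * z ^ 2) * (α * z - q) - q)) * deriv (deriv u) z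
      + (z ^ 2 * ((α + ε) * z * (α * z - 2 * q) + (q ^ 2 - δ * q - α * γ)))
          * deriv u z = 0 := by
    linear_combination z * (α * z - q) * key - q * z * hz'
  have hG : deriv (deriv (deriv u)) z
        + ((γ + 1) / z + δ + ε * z - α / (α * z - q)) * deriv (deriv u) z
        + (((α + ε) * z * (α * z - 2 * q) + (q ^ 2 - δ * q - α * γ))
            / (z * (α * z - q))) * deriv u z
      = (z ^ 3 * (α * z - q) * deriv (deriv (deriv u)) z
          + (z ^ 2 * ((γ + δ * z + ε * z ^ 2) * (α * z - q) - q)) * deriv (deriv u) z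
          + (z ^ 2 * ((α + ε) * z * (α * z - 2 * q) + (q ^ 2 - δ * q - α * γ)))
              * deriv u z) / (z ^ 3 * (α * z - q)) := by
    have haz' : z * α - q ≠ 0 := by rwa [mul_comm]
    field_simp [haz']
    ring
  rw [hG, hpoly, zero_div]
end

section
/- Let t, λ, κ₀, κ₁, θ, κ∞ ∈ ℂ with t ∉ {0, 1} and λ ∉ {0, 1, t}. Set κ = (1/4)(κ₀ + κ₁ + θ − 1)² − (1/4)κ∞², γ = −κ₀, δ = −κ₁, ε = −θ, P = κ₀ + κ₁ + θ + κ (the value of the product αβ), q = P·λ, and assume P ≠ 0. Define μ = κ₀/λ + κ₁/(λ−1) + θ/(λ−t) and let H be determined by t(t−1)H = λ(λ−1)(λ−t)μ² − (κ₀(λ−1)(λ−t) + κ₁λ(λ−t) + (θ−1)λ(λ−1))μ + κ(λ−t). Then for every z ∈ ℂ ∖ {0, 1, t, λ}: (i) (γ+1)/z + (δ+1)/(z−1) + (ε+1)/(z−t) − P/(P·z − q) = (1−κ₀)/z + (1−κ₁)/(z−1) + (1−θ)/(z−t) − 1/(z−λ); and (ii) f(z)/(z(z−1)(z−t)(P·z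 − q)) = κ/(z(z−1)) − t(t−1)H/(z(z−1)(z−t)) + λ(λ−1)μ/(z(z−1)(z−λ)), where f(z) = z(P·z − 2q)(P + γ + δ + ε) + (q² + q(γ + t(γ+δ) + ε) − P·γ·t). Hence the equation for the derivative of the general Heun function coincides with the linear equation whose isomonodromic deformations are governed by the sixth Painlevé equation. -/
set_option maxHeartbeats 4000000


/-- With the parameter identification of the paper, the equation for the derivative
of the general Heun function coincides with the linear equation whose isomonodromic
deformations are governed by the sixth Painlevé equation. -/
theorem general_Heun_derivative_eq_PVI_linear
    (t lam κ₀ κ₁ θ κinf κ γ δ ε P q μ H : ℂ)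
    (ht0 : t ≠ 0) (ht1 : t ≠ 1)
    (hl0 : lam ≠ 0) (hl1 : lam ≠ 1) (hlt : lam ≠ t)
    (hκ : κ = (1 / 4) * (κ₀ + κ₁ + θ - 1) ^ 2 - (1 / 4) * κinf ^ 2)
    (hγ : γ = -κ₀) (hδ : δ = -κ₁) (hε : ε = -θ)
    (hP : P = κ₀ + κ₁ + θ + κ) (hq : q = P * lam) (hP0 : P ≠ 0)
    (hμ : μ = κ₀ / lam + κ₁ / (lam - 1) + θ / (lam - t))
    (hH : t * (t - 1) * H =
      lam * (lam - 1) * (lam - t) * μ ^ 2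
        - (κ₀ * (lam - 1) * (lam - t) + κ₁ * lam * (lam - t)
            + (θ - 1) * lam * (lam - 1)) * μ + κ * (lam - t)) :
    ∀ z : ℂ, z ≠ 0 → z ≠ 1 → z ≠ t → z ≠ lam →
      ((γ + 1) / z + (δ + 1) / (z - 1) + (ε + 1) / (z - t) - P / (P * z - q)
          = (1 - κ₀) / z + (1 - κ₁) / (z - 1) + (1 - θ) / (z - t) - 1 / (z - lam))
      ∧
      ((z * (P * z - 2 * q) * (P + γ + δ + ε)
          + (q ^ 2 + q * (γ + t * (γ + δ) + ε) - P * γ * t))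
          / (z * (z - 1) * (z - t) * (P * z - q))
        = κ / (z * (z - 1)) - t * (t - 1) * H / (z * (z - 1) * (z - t))
            + lam * (lam - 1) * μ / (z * (z - 1) * (z - lam))) := by
  intro z hz0 hz1 hzt hzl
  have hz1' : z - 1 ≠ 0 := sub_ne_zero.mpr hz1
  have hzt' : z - t ≠ 0 := sub_ne_zero.mpr hzt
  have hzl' : z - lam ≠ 0 := sub_ne_zero.mpr hzl
  have hl1' : lam - 1 ≠ 0 := sub_ne_zero.mpr hl1
  have hlt' : lam - t ≠ 0 := sub_ne_zero.mpr hlt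
  have ht1' : t - 1 ≠ 0 := sub_ne_zero.mpr ht1
  have hPzq : P * z - q = P * (z - lam) := by rw [hq]; ring
  have hPzq0 : P * z - q ≠ 0 := by rw [hPzq]; exact mul_ne_zero hP0 hzl'
  constructor
  · subst hγ hδ hε
    rw [hPzq]
    field_simp
    ring
  · have hD0 : lam * (lam - 1) * (lam - t) ≠ 0 :=
      mul_ne_zero (mul_ne_zero hl0 hl1') hlt'
    have hμD : lam * (lam - 1) * (lam - t) * μ
        = κ₀ * (lam - 1) * (lam - t) + κ₁ * lam * (lam - t) + θ * lam * (lam - 1) := by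
      rw [hμ]; field_simp
    have hκ2 : κ = P - κ₀ - κ₁ - θ := by rw [hP]; ring
    have hHD : t * (t - 1) * H * (lam * (lam - 1) * (lam - t))
        = (κ₀ * (lam - 1) * (lam - t) + κ₁ * lam * (lam - t) + θ * lam * (lam - 1)) ^ 2
          - (κ₀ * (lam - 1) * (lam - t) + κ₁ * lam * (lam - t)
            + (θ - 1) * lam * (lam - 1))
            * (κ₀ * (lam - 1) * (lam - t) + κ₁ * lam * (lam - t) + θ * lam * (lam - 1))
          + (P - κ₀ - κ₁ - θ) * (lam - t) * (lam * (lam - 1) * (lam - t)) := by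
      rw [← hκ2]
      linear_combination (lam * (lam - 1) * (lam - t)) * hH
        + (lam * (lam - 1) * (lam - t) * μ
            + (κ₀ * (lam - 1) * (lam - t) + κ₁ * lam * (lam - t) + θ * lam * (lam - 1))
            - (κ₀ * (lam - 1) * (lam - t) + κ₁ * lam * (lam - t)
              + (θ - 1) * lam * (lam - 1))) * hμD
    subst hγ hδ hε hq
    have hE : z * (z - 1) * (z - t) * (z - lam) ≠ 0 :=
      mul_ne_zero (mul_ne_zero (mul_ne_zero hz0 hz1') hzt') hzl'
    have hW : z * (z - 1) * (z - t) * (P * (z - lam)) ≠ 0 :=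
      mul_ne_zero (mul_ne_zero (mul_ne_zero hz0 hz1') hzt') (mul_ne_zero hP0 hzl')
    have hRHS : κ / (z * (z - 1)) - t * (t - 1) * H / (z * (z - 1) * (z - t))
          + lam * (lam - 1) * μ / (z * (z - 1) * (z - lam))
        = (κ * (z - t) * (z - lam) - t * (t - 1) * H * (z - lam)
            + lam * (lam - 1) * μ * (z - t)) / (z * (z - 1) * (z - t) * (z - lam)) := by
      have e1 : κ / (z * (z - 1)) = κ * (z - t) * (z - lam)
          / (z * (z - 1) * (z - t) * (z - lam)) := by
        rw [div_eq_div_iff (mul_ne_zero hz0 hz1') hE]; ring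
      have e2 : t * (t - 1) * H / (z * (z - 1) * (z - t)) = t * (t - 1) * H * (z - lam)
          / (z * (z - 1) * (z - t) * (z - lam)) := by
        rw [div_eq_div_iff (mul_ne_zero (mul_ne_zero hz0 hz1') hzt') hE]; ring
      have e3 : lam * (lam - 1) * μ / (z * (z - 1) * (z - lam))
          = lam * (lam - 1) * μ * (z - t) / (z * (z - 1) * (z - t) * (z - lam)) := by
        rw [div_eq_div_iff (mul_ne_zero (mul_ne_zero hz0 hz1') hzl') hE]; ring
      rw [e1, e2, e3, div_sub_div_same, ← add_div]
    rw [hRHS, hPzq, div_eq_div_iff hW hE, hκ2]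
    refine mul_right_cancel₀ hD0 ?_
    linear_combination ((z - lam) * (z * (z - 1) * (z - t) * (P * (z - lam)))) * hHD
      - (lam * (lam - 1) * (z - t) * (z * (z - 1) * (z - t) * (P * (z - lam)))) * hμD
end

section
/- Let κ₀, κ₁, θ, κ ∈ ℂ and let I ⊆ ℝ be a nonempty open interval with 0 ∉ I and 1 ∉ I. Let λ : I → ℂ be differentiable with λ(t) ∉ {0, 1, t} for all t ∈ I, and define μ : I → ℂ by μ(t) = κ₀/λ(t) + κ₁/(λ(t)−1) + θ/(λ(t)−t). Suppose λ and μ satisfy the Hamiltonian system t(t−1)·λ'(t) = 2λ(λ−1)(λ−t)μ − (κ₀(λ−1)(λ−t) + κ₁λ(λ−t) + (θ−1)λ(λ−1)) and t(t−1)·μ'(t) = −[(3λ² − 2(1+t)λ + t)μ² − (κ₀(2λ−1−t) + κ₁(2λ−t) + (θ−1)(2λ−1))μ + κ] on I (these are dλ/dt = ∂H_VI/∂μ and dμ/dt = −∂H_VI/∂λ). Then λ satisfies the Riccati equation t(t−1)·dλ/dt = κ₀t − (1 + κ₀ + (κ₀+κ₁)t + θ)λ + (1 + κ₀ + κ₁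 + θ)λ², and moreover κ₀ + κ₁ + θ + κ = 0. -/
set_option maxHeartbeats 3200000


/-- If `(λ, μ)` solve the `P_VI` Hamiltonian system with `μ` constrained to the
stated rational function of `λ`, then `λ` solves a Riccati equation and
`κ₀ + κ₁ + θ + κ = 0`. -/
theorem PVI_constrained_solution_Riccati
    (κ₀ κ₁ θ κ : ℂ) (a b : ℝ) (hab : a < b)
    (h0 : (0 : ℝ) ∉ Set.Ioo a b) (h1 : (1 : ℝ) ∉ Set.Ioo a b)
    (l m : ℝ → ℂ)
    (hld : ∀ x ∈ Set.Ioo a b, DifferentiableAt ℝ l x)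
    (hl0 : ∀ x ∈ Set.Ioo a b, l x ≠ 0)
    (hl1 : ∀ x ∈ Set.Ioo a b, l x ≠ 1)
    (hlt : ∀ x ∈ Set.Ioo a b, l x ≠ (x : ℂ))
    (hm : ∀ x ∈ Set.Ioo a b,
      m x = κ₀ / l x + κ₁ / (l x - 1) + θ / (l x - (x : ℂ)))
    (hham1 : ∀ x ∈ Set.Ioo a b,
      (x : ℂ) * ((x : ℂ) - 1) * deriv l x =
        2 * l x * (l x - 1) * (l x - (x : ℂ)) * m x
          - (κ₀ * (l x - 1) * (l x - (x : ℂ)) + κ₁ * l x * (l x - (x : ℂ))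
              + (θ - 1) * l x * (l x - 1)))
    (hham2 : ∀ x ∈ Set.Ioo a b,
      (x : ℂ) * ((x : ℂ) - 1) * deriv m x =
        -((3 * l x ^ 2 - 2 * (1 + (x : ℂ)) * l x + (x : ℂ)) * m x ^ 2
            - (κ₀ * (2 * l x - 1 - (x : ℂ)) + κ₁ * (2 * l x - (x : ℂ))
                + (θ - 1) * (2 * l x - 1)) * m x + κ)) :
    (∀ x ∈ Set.Ioo a b,
      (x : ℂ) * ((x : ℂ) - 1) * deriv l x =
        κ₀ * (x : ℂ) - (1 + κ₀ + (κ₀ + κ₁) * (x : ℂ) + θ) * l x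
          + (1 + κ₀ + κ₁ + θ) * l x ^ 2)
    ∧ κ₀ + κ₁ + θ + κ = 0 := by
  have hx0 : (a + b) / 2 ∈ Set.Ioo a b := ⟨by linarith, by linarith⟩
  -- common: cleared form of the constraint on μ
  have eM : ∀ x ∈ Set.Ioo a b,
      m x * (l x * (l x - 1) * (l x - (x : ℂ))) =
        κ₀ * (l x - 1) * (l x - (x : ℂ)) + κ₁ * (l x * (l x - (x : ℂ)))
          + θ * (l x * (l x - 1)) := by
    intro x hx
    have hP0 := hl0 x hx
    have hP1 : l x - 1 ≠ 0 := sub_ne_zero.mpr (hl1 x hx)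
    have hPt : l x - (x : ℂ) ≠ 0 := sub_ne_zero.mpr (hlt x hx)
    rw [hm x hx]
    field_simp
  constructor
  · intro x hx
    linear_combination (hham1 x hx) + 2 * (eM x hx)
  · set x0 : ℝ := (a + b) / 2 with hx0def
    have hP0 := hl0 x0 hx0
    have hP1 : l x0 - 1 ≠ 0 := sub_ne_zero.mpr (hl1 x0 hx0)
    have hPt : l x0 - (x0 : ℂ) ≠ 0 := sub_ne_zero.mpr (hlt x0 hx0)
    set L' : ℂ := deriv l x0 with hL'
    have hlx : HasDerivAt l L' x0 := (hld x0 hx0).hasDerivAt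
    have hre : HasDerivAt (fun y : ℝ => (y : ℂ)) 1 x0 :=
      (hasDerivAt_id ((x0 : ℂ))).comp_ofReal
    have h1d : HasDerivAt (fun x => κ₀ / l x)
        ((0 * l x0 - κ₀ * L') / l x0 ^ 2) x0 :=
      (hasDerivAt_const x0 κ₀).div hlx hP0
    have h2d : HasDerivAt (fun x => κ₁ / (l x - 1))
        ((0 * (l x0 - 1) - κ₁ * (L' - 0)) / (l x0 - 1) ^ 2) x0 :=
      (hasDerivAt_const x0 κ₁).div (hlx.sub (hasDerivAt_const x0 1)) hP1
    have h3d : HasDerivAt (fun x : ℝ => θ / (l x - (x : ℂ)))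
        ((0 * (l x0 - (x0 : ℂ)) - θ * (L' - 1)) / (l x0 - (x0 : ℂ)) ^ 2) x0 :=
      (hasDerivAt_const x0 θ).div (hlx.sub hre) hPt
    have hsum : HasDerivAt
        (fun x : ℝ => κ₀ / l x + κ₁ / (l x - 1) + θ / (l x - (x : ℂ)))
        (-(κ₀ * L') / l x0 ^ 2 - κ₁ * L' / (l x0 - 1) ^ 2
          - θ * (L' - 1) / (l x0 - (x0 : ℂ)) ^ 2) x0 := by
      have h := (h1d.add h2d).add h3d
      exact h.congr_deriv (by ring)
    have hev : m =ᶠ[nhds x0]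
        fun x : ℝ => κ₀ / l x + κ₁ / (l x - 1) + θ / (l x - (x : ℂ)) :=
      Filter.eventuallyEq_of_mem (isOpen_Ioo.mem_nhds hx0) (fun x hx => hm x hx)
    have hmd : HasDerivAt m
        (-(κ₀ * L') / l x0 ^ 2 - κ₁ * L' / (l x0 - 1) ^ 2
          - θ * (L' - 1) / (l x0 - (x0 : ℂ)) ^ 2) x0 :=
      hsum.congr_of_eventuallyEq hev
    have hderivm : deriv m x0 =
        -(κ₀ * L') / l x0 ^ 2 - κ₁ * L' / (l x0 - 1) ^ 2
          - θ * (L' - 1) / (l x0 - (x0 : ℂ)) ^ 2 := hmd.deriv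
    -- cleared form of the derivative of μ
    have eD : deriv m x0 * (l x0 * (l x0 - 1) * (l x0 - (x0 : ℂ))) ^ 2 =
        -(κ₀ * L') * ((l x0 - 1) * (l x0 - (x0 : ℂ))) ^ 2
          - κ₁ * L' * (l x0 * (l x0 - (x0 : ℂ))) ^ 2
          - θ * (L' - 1) * (l x0 * (l x0 - 1)) ^ 2 := by
      rw [hderivm]
      field_simp
    have e1 := hham1 x0 hx0
    have e2 := hham2 x0 hx0
    have eM0 := eM x0 hx0
    rw [← hL'] at e1
    -- abbreviations (as plain terms) for the linear combination
    have main : (κ₀ + κ₁ + θ + κ) *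
        (l x0 * (l x0 - 1) * (l x0 - (x0 : ℂ))) ^ 2 = 0 := by
      linear_combination
        (l x0 * (l x0 - 1) * (l x0 - (x0 : ℂ))) ^ 2 * e2
        + (κ₀ * ((l x0 - 1) * (l x0 - (x0 : ℂ))) ^ 2
            + κ₁ * (l x0 * (l x0 - (x0 : ℂ))) ^ 2
            + θ * (l x0 * (l x0 - 1)) ^ 2) * e1
        + ((κ₀ * (2 * l x0 - 1 - (x0 : ℂ)) + κ₁ * (2 * l x0 - (x0 : ℂ))
              + (θ - 1) * (2 * l x0 - 1)) * (l x0 * (l x0 - 1) * (l x0 - (x0 : ℂ)))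
            + 2 * (κ₀ * ((l x0 - 1) * (l x0 - (x0 : ℂ))) ^ 2
                + κ₁ * (l x0 * (l x0 - (x0 : ℂ))) ^ 2
                + θ * (l x0 * (l x0 - 1)) ^ 2)
            - (3 * l x0 ^ 2 - 2 * (1 + (x0 : ℂ)) * l x0 + (x0 : ℂ)) * m x0 *
                (l x0 * (l x0 - 1) * (l x0 - (x0 : ℂ)))
            - (3 * l x0 ^ 2 - 2 * (1 + (x0 : ℂ)) * l x0 + (x0 : ℂ)) *
                (κ₀ * (l x0 - 1) * (l x0 - (x0 : ℂ)) + κ₁ * (l x0 * (l x0 - (x0 : ℂ)))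
                  + θ * (l x0 * (l x0 - 1)))) * eM0
        - (x0 : ℂ) * ((x0 : ℂ) - 1) * eD
    rcases mul_eq_zero.mp main with h | h
    · exact h
    · exact absurd h (pow_ne_zero 2 (by
        exact mul_ne_zero (mul_ne_zero hP0 hP1) hPt))
end

section
/- Let t, λ, κ₀, θ∞ ∈ ℂ with λ ≠ 0 and θ∞ ≠ −1. Set γ = −κ₀, δ = −t, ε = −1/2, α = (θ∞ + 1)/2, q = αλ, μ = t + κ₀/λ + λ/2, and H = 2λμ² − (λ² + 2tλ + 2κ₀)μ + θ∞λ. Then for every z ∈ ℂ ∖ {0, λ}: (i) (γ+1)/z + δ + εz − α/(αz − q) = (1−κ₀)/z − (z + 2t)/2 − 1/(z−λ); and (ii) k(z)/(z(αz − q)) = (1/2)θ∞ − H/(2z) + λμ/(z(z−λ)), where k(z) = (α+ε)·z·(αz − 2q) + (q² − δq − αγ). Hence the equation for the derivative of the bi-confluent Heun function coincides with the linear equation whose isomonodromic deformations are governed by the fourth Painlevé equation. -/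
/-- With the parameter identification of the paper, the equation for the derivative
of the bi-confluent Heun function coincides with the linear equation whose
isomonodromic deformations are governed by the fourth Painlevé equation. -/
theorem bi_confluent_Heun_derivative_eq_PIV_linear
    (t lam κ₀ θinf γ δ ε α q μ H : ℂ)
    (hl0 : lam ≠ 0) (hθ : θinf ≠ -1)
    (hγ : γ = -κ₀) (hδ : δ = -t) (hε : ε = -(1 / 2))
    (hα : α = (θinf + 1) / 2) (hq : q = α * lam)
    (hμ : μ = t + κ₀ / lam + lam / 2)
    (hH : H = 2 * lam * μ ^ 2 - (lam ^ 2 + 2 * t * lam + 2 * κ₀) * μ + θinf * lam) :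
    ∀ z : ℂ, z ≠ 0 → z ≠ lam →
      ((γ + 1) / z + δ + ε * z - α / (α * z - q)
          = (1 - κ₀) / z - (z + 2 * t) / 2 - 1 / (z - lam))
      ∧
      (((α + ε) * z * (α * z - 2 * q) + (q ^ 2 - δ * q - α * γ)) / (z * (α * z - q))
        = (1 / 2) * θinf - H / (2 * z) + lam * μ / (z * (z - lam))) := by
  intro z hz hzl
  have hθ1 : θinf + 1 ≠ 0 := fun h => hθ (by linear_combination h)
  have hα0 : α ≠ 0 := by rw [hα]; exact div_ne_zero hθ1 two_ne_zero
  have hzl' : z - lam ≠ 0 := sub_ne_zero.mpr hzl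
  have hfac : α * z - q = α * (z - lam) := by rw [hq]; ring
  have hknum : (α + ε) * z * (α * z - 2 * q) + (q ^ 2 - δ * q - α * γ)
      = α * ((θinf / 2) * z * (z - 2 * lam) + α * lam ^ 2 + t * lam + κ₀) := by
    rw [hγ, hδ, hε, hq, hα]; ring
  rw [hfac, hknum, div_mul_cancel_left₀ hα0,
    show z * (α * (z - lam)) = α * (z * (z - lam)) by ring,
    mul_div_mul_left _ _ hα0]
  have hH' : H = θinf * lam := by
    rw [hH, hμ]; field_simp; ring
  have hlμ : lam * μ = t * lam + κ₀ + lam ^ 2 / 2 := by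
    rw [hμ]; field_simp
  rw [hH', show lam * μ / (z * (z - lam)) = (t * lam + κ₀ + lam ^ 2 / 2) / (z * (z - lam)) by rw [hlμ]]
  subst hγ hδ hε hα
  refine ⟨?_, ?_⟩
  · field_simp
    ring
  · field_simp
    ring
end

section
/- Let κ₀, θ∞ ∈ ℂ and let I ⊆ ℝ be a nonempty open interval. Let λ : I → ℂ be differentiable with λ(t) ≠ 0 for all t ∈ I, and define μ : I → ℂ by μ(t) = t + κ₀/λ(t) + λ(t)/2. Suppose λ and μ satisfy the Hamiltonian system λ'(t) = 4λμ − (λ² + 2tλ + 2κ₀) and μ'(t) = −(2μ² − 2(λ + t)μ + θ∞) on I (these are dλ/dt = ∂H_IV/∂μ and dμ/dt = −∂H_IV/∂λ). Then λ satisfies the Riccati equation dλ/dt = λ² + 2tλ + 2κ₀, and moreover θ∞ + 1 = 0. -/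
/-- If `(λ, μ)` solve the `P_IV` Hamiltonian system with `μ` constrained to the
stated rational function of `λ`, then `λ` solves a Riccati equation and
`θ∞ + 1 = 0`. -/
theorem PIV_constrained_solution_Riccati
    (κ₀ θinf : ℂ)
    (a b : ℝ) (hab : a < b)
    (l m : ℝ → ℂ)
    (hld : ∀ x ∈ Set.Ioo a b, DifferentiableAt ℝ l x)
    (hl0 : ∀ x ∈ Set.Ioo a b, l x ≠ 0)
    (hm : ∀ x ∈ Set.Ioo a b, m x = (x : ℂ) + κ₀ / l x + l x / 2)
    (hham1 : ∀ x ∈ Set.Ioo a b,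
      deriv l x = 4 * l x * m x - (l x ^ 2 + 2 * (x : ℂ) * l x + 2 * κ₀))
    (hham2 : ∀ x ∈ Set.Ioo a b,
      deriv m x = -(2 * m x ^ 2 - 2 * (l x + (x : ℂ)) * m x + θinf)) :
    (∀ x ∈ Set.Ioo a b,
      deriv l x = l x ^ 2 + 2 * (x : ℂ) * l x + 2 * κ₀)
    ∧ θinf + 1 = 0 := by
  have hric : ∀ x ∈ Set.Ioo a b,
      deriv l x = l x ^ 2 + 2 * (x : ℂ) * l x + 2 * κ₀ := by
    intro x hx
    have h1 := hham1 x hx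
    rw [hm x hx] at h1
    rw [h1]
    have h0 := hl0 x hx
    field_simp
    ring
  refine ⟨hric, ?_⟩
  -- work at the midpoint
  set x₀ : ℝ := (a + b) / 2 with hx₀
  have hx : x₀ ∈ Set.Ioo a b := ⟨by simp [hx₀]; linarith, by simp [hx₀]; linarith⟩
  have h0 := hl0 x₀ hx
  have hdl : HasDerivAt l (deriv l x₀) x₀ := (hld x₀ hx).hasDerivAt
  have hre : HasDerivAt (fun x : ℝ => (x : ℂ)) 1 x₀ := by
    simpa using (hasDerivAt_id x₀).ofReal_comp
  have hmd : HasDerivAt (fun x : ℝ => (x : ℂ) + κ₀ / l x + l x / 2)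
      (1 + (0 * l x₀ - κ₀ * deriv l x₀) / l x₀ ^ 2 + deriv l x₀ / 2) x₀ :=
    (hre.add (((hasDerivAt_const x₀ κ₀).div hdl h0))).add (hdl.div_const 2)
  have heq : m =ᶠ[nhds x₀] fun x : ℝ => (x : ℂ) + κ₀ / l x + l x / 2 := by
    filter_upwards [isOpen_Ioo.mem_nhds hx] with y hy using hm y hy
  have hdm : deriv m x₀ = 1 + (0 * l x₀ - κ₀ * deriv l x₀) / l x₀ ^ 2 + deriv l x₀ / 2 := by
    rw [Filter.EventuallyEq.deriv_eq heq]
    exact hmd.deriv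
  have h2 := hham2 x₀ hx
  rw [hdm, hm x₀ hx, hric x₀ hx] at h2
  field_simp at h2
  have key : (θinf + 1) * (16 * l x₀ ^ 5) = 0 := by linear_combination (8 * l x₀ ^ 3) * h2
  rcases mul_eq_zero.1 key with h | h
  · exact h
  · exact absurd h (mul_ne_zero (by norm_num) (pow_ne_zero _ h0))
end

section
/- Let t, λ, η₀, η∞, θ₀, θ∞ ∈ ℂ with λ ≠ 0 and η∞(θ₀ + θ∞ + 2) ≠ 0. Set γ = tη₀, δ = −1 − θ₀, ε = −η∞, α = (1/2)η∞(θ₀ + θ∞ + 2), q = αλ, μ = η∞ − tη₀/λ² + (θ₀ + 1)/λ, and let H be determined by t·H = λ²μ² − (η∞λ² + θ₀λ − η₀t)μ + (1/2)η∞(θ₀ + θ∞)λ. Then for every z ∈ ℂ ∖ {0, λ}: (i) γ/z² + (δ+2)/z + ε − α/(αz − q) = η₀t/z² + (1−θ₀)/z − η∞ − 1/(z−λ); and (ii) h(z)/(z²(αz − q)) = η∞(θ₀+θ∞)/(2z) − tH/z² + λμ/(z(z−λ)), where h(z) = (α+ε)(αz² − 2qz) + (q² − δq − αγ). Hence the equation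 for the derivative of the double-confluent Heun function coincides with the linear equation whose isomonodromic deformations are governed by the modified third Painlevé equation P′_III. -/
set_option maxHeartbeats 1000000

/-- With the parameter identification of the paper, the equation for the derivative
of the double-confluent Heun function coincides with the linear equation whose
isomonodromic deformations are governed by the modified third Painlevé equation. -/
theorem double_confluent_Heun_derivative_eq_PIII_linear
    (t lam η₀ ηinf θ₀ θinf γ δ ε α q μ H : ℂ)
    (hl0 : lam ≠ 0) (hne : ηinf * (θ₀ + θinf + 2) ≠ 0)
    (hγ : γ = t * η₀) (hδ : δ = -1 - θ₀) (hε : ε = -ηinf)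
    (hα : α = (1 / 2) * ηinf * (θ₀ + θinf + 2)) (hq : q = α * lam)
    (hμ : μ = ηinf - t * η₀ / lam ^ 2 + (θ₀ + 1) / lam)
    (hH : t * H = lam ^ 2 * μ ^ 2 - (ηinf * lam ^ 2 + θ₀ * lam - η₀ * t) * μ
        + (1 / 2) * ηinf * (θ₀ + θinf) * lam) :
    ∀ z : ℂ, z ≠ 0 → z ≠ lam →
      (γ / z ^ 2 + (δ + 2) / z + ε - α / (α * z - q)
          = η₀ * t / z ^ 2 + (1 - θ₀) / z - ηinf - 1 / (z - lam))
      ∧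
      (((α + ε) * (α * z ^ 2 - 2 * q * z) + (q ^ 2 - δ * q - α * γ))
          / (z ^ 2 * (α * z - q))
        = ηinf * (θ₀ + θinf) / (2 * z) - t * H / z ^ 2 + lam * μ / (z * (z - lam))) := by
  intro z hz hzl
  have hα0 : α ≠ 0 := by
    rw [hα]; intro h; apply hne
    rcases mul_eq_zero.mp h with h' | h'
    · rcases mul_eq_zero.mp h' with h'' | h''
      · norm_num at h''
      · simp [h'']
    · simp [h']
  have hzl' : z - lam ≠ 0 := sub_ne_zero.mpr hzl
  have hfac : α * z - q = α * (z - lam) := by rw [hq]; ring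
  have hden : α * z - q ≠ 0 := by rw [hfac]; exact mul_ne_zero hα0 hzl'
  constructor
  · rw [hγ, hδ, hε, hfac]
    field_simp
    ring
  · have hν : μ * lam ^ 2 = ηinf * lam ^ 2 - t * η₀ + (θ₀ + 1) * lam := by
      rw [hμ]; field_simp
    have hD : (2 : ℂ) * z ^ 2 * lam ^ 2 * (z - lam) ≠ 0 :=
      mul_ne_zero (mul_ne_zero (mul_ne_zero two_ne_zero (pow_ne_zero 2 hz))
        (pow_ne_zero 2 hl0)) hzl'
    have hd1 : z ^ 2 * (α * z - q) ≠ 0 := mul_ne_zero (pow_ne_zero 2 hz) hden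
    have hL : ((α + ε) * (α * z ^ 2 - 2 * q * z) + (q ^ 2 - δ * q - α * γ))
          / (z ^ 2 * (α * z - q))
        = (2 * lam ^ 2 * ((α + ε) * (z ^ 2 - 2 * lam * z) + α * lam ^ 2 - δ * lam - γ))
          / (2 * z ^ 2 * lam ^ 2 * (z - lam)) := by
      rw [div_eq_div_iff hd1 hD, hfac, hq]; ring
    have hR : ηinf * (θ₀ + θinf) / (2 * z) - t * H / z ^ 2 + lam * μ / (z * (z - lam))
        = (ηinf * (θ₀ + θinf) * z * lam ^ 2 * (z - lam)
            - 2 * (t * H) * lam ^ 2 * (z - lam) + 2 * z * lam ^ 3 * μ)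
          / (2 * z ^ 2 * lam ^ 2 * (z - lam)) := by
      rw [eq_div_iff hD]
      field_simp
    rw [hL, hR]
    congr 1
    linear_combination 2 * lam ^ 2 * (z - lam) * hH
      + 2 * lam ^ 2 * ((z - lam) * μ - 1) * hν
      + (2 * lam ^ 2 * (z - lam) ^ 2) * hα
      + (2 * lam ^ 2 * (z ^ 2 - 2 * lam * z)) * hε
      + (-2 * lam ^ 3) * hδ
      + (-2 * lam ^ 2) * hγ
end

section
/- Let η₀, η∞, θ₀, θ∞ ∈ ℂ and let I ⊆ ℝ be a nonempty open interval with 0 ∉ I. Let λ : I → ℂ be differentiable with λ(t) ≠ 0 for all t ∈ I, and define μ : I → ℂ by μ(t) = η∞ − tη₀/λ(t)² + (θ₀ + 1)/λ(t). Suppose λ and μ satisfy the Hamiltonian system t·λ'(t) = 2λ²μ − (η∞λ² + θ₀λ − η₀t) and t·μ'(t) = −(2λμ² − (2η∞λ + θ₀)μ + (1/2)η∞(θ₀ + θ∞)) on I (these are dλ/dt = ∂H′_III/∂μ and dμ/dt = −∂H′_III/∂λ). Then λ satisfies the Riccati equation t·dλ/dt = η∞λ² + (θ₀ + 2)λ −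 tη₀, and moreover η∞(θ₀ + θ∞ + 2) = 0. -/
/-- If `(λ, μ)` solve the `P'_III` Hamiltonian system with `μ` constrained to the
stated rational function of `λ`, then `λ` solves a Riccati equation and
`η∞(θ₀ + θ∞ + 2) = 0`. -/
theorem PIII_constrained_solution_Riccati
    (η₀ ηinf θ₀ θinf : ℂ)
    (a b : ℝ) (hab : a < b) (h0 : (0 : ℝ) ∉ Set.Ioo a b)
    (l m : ℝ → ℂ)
    (hld : ∀ x ∈ Set.Ioo a b, DifferentiableAt ℝ l x)
    (hl0 : ∀ x ∈ Set.Ioo a b, l x ≠ 0)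
    (hm : ∀ x ∈ Set.Ioo a b,
      m x = ηinf - (x : ℂ) * η₀ / l x ^ 2 + (θ₀ + 1) / l x)
    (hham1 : ∀ x ∈ Set.Ioo a b,
      (x : ℂ) * deriv l x =
        2 * l x ^ 2 * m x - (ηinf * l x ^ 2 + θ₀ * l x - η₀ * (x : ℂ)))
    (hham2 : ∀ x ∈ Set.Ioo a b,
      (x : ℂ) * deriv m x =
        -(2 * l x * m x ^ 2 - (2 * ηinf * l x + θ₀) * m x
            + (1 / 2) * ηinf * (θ₀ + θinf))) :
    (∀ x ∈ Set.Ioo a b,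
      (x : ℂ) * deriv l x = ηinf * l x ^ 2 + (θ₀ + 2) * l x - (x : ℂ) * η₀)
    ∧ ηinf * (θ₀ + θinf + 2) = 0 := by
  have hric : ∀ x ∈ Set.Ioo a b,
      (x : ℂ) * deriv l x = ηinf * l x ^ 2 + (θ₀ + 2) * l x - (x : ℂ) * η₀ := by
    intro x hx
    have h1 := hham1 x hx
    rw [hm x hx] at h1
    rw [h1]
    field_simp [hl0 x hx]
    ring
  refine ⟨hric, ?_⟩
  -- pick a point
  have hx : ((a + b) / 2) ∈ Set.Ioo a b := ⟨by linarith, by linarith⟩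
  set x : ℝ := (a + b) / 2 with hxdef
  have hx0 : (x : ℂ) ≠ 0 := by
    have : x ≠ 0 := fun h => h0 (h ▸ hx)
    exact_mod_cast Complex.ofReal_ne_zero.mpr this
  have hL0 : l x ≠ 0 := hl0 x hx
  have hL : HasDerivAt l (deriv l x) x := (hld x hx).hasDerivAt
  have hxc : HasDerivAt (fun s : ℝ => (s : ℂ)) 1 x := by
    simpa using (hasDerivAt_id x).ofReal_comp
  have hg := (hxc.mul_const η₀).div (hL.mul hL) (mul_ne_zero hL0 hL0)
  have hh := (hasDerivAt_const x (θ₀ + 1)).div hL hL0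
  have hF := ((hasDerivAt_const x ηinf).sub hg).add hh
  have hmeq : m =ᶠ[nhds x]
      (fun s : ℝ => ηinf - (s : ℂ) * η₀ / (l s * l s) + (θ₀ + 1) / l s) := by
    filter_upwards [isOpen_Ioo.mem_nhds hx] with s hs
    rw [hm s hs, pow_two]
  have hdm := (hF.congr_of_eventuallyEq hmeq).deriv
  have hR := hric x hx
  have hL' : deriv l x = (ηinf * l x ^ 2 + (θ₀ + 2) * l x - (x : ℂ) * η₀) / (x : ℂ) := by
    field_simp
    linear_combination hR
  have h2 := hham2 x hx
  rw [hdm, hm x hx, hL'] at h2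
  simp only [Pi.mul_apply] at h2
  field_simp [hL0, hx0] at h2
  have hkey : ηinf * (θ₀ + θinf + 2) * ((x : ℂ) ^ 2 * l x ^ 15) = 0 := by
    linear_combination ((x : ℂ) ^ 2 * l x ^ 12) * h2
  rcases mul_eq_zero.mp hkey with h | h
  · exact h
  · exact absurd h (mul_ne_zero (pow_ne_zero 2 hx0) (pow_ne_zero 15 hL0))
end

section
/- Let t, λ, α₂ ∈ ℂ with α₂ ≠ 1/2. Set γ = −t, δ = 0, ε = −2, α = 1 − 2α₂, q = αλ, μ = 2λ² + t, and H = μ²/2 − (λ² + t/2)μ − (α₂ + 1/2)λ. Then for every z ∈ ℂ with z ≠ λ: (i) γ + δz + εz² − α/(αz − q) = −2z² − t − 1/(z−λ); and (ii) p(z)/(αz − q) = −(2α₂ + 1)z − 2H + μ/(z−λ), where p(z) = (α+ε)(αz² − 2qz) + (q² − δq − αγ). Hence the equation for the derivative of the tri-confluent Heun function coincides with the linear equation whose isomonodromic deformations are governed by the second Painlevé equation. -/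
/-- With the parameter identification of the paper, the equation for the derivative
of the tri-confluent Heun function coincides with the linear equation whose
isomonodromic deformations are governed by the second Painlevé equation. -/
theorem tri_confluent_Heun_derivative_eq_PII_linear
    (t lam α₂ γ δ ε α q μ H : ℂ)
    (hα₂ : α₂ ≠ 1 / 2)
    (hγ : γ = -t) (hδ : δ = 0) (hε : ε = -2)
    (hα : α = 1 - 2 * α₂) (hq : q = α * lam)
    (hμ : μ = 2 * lam ^ 2 + t)
    (hH : H = μ ^ 2 / 2 - (lam ^ 2 + t / 2) * μ - (α₂ + 1 / 2) * lam) :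
    ∀ z : ℂ, z ≠ lam →
      (γ + δ * z + ε * z ^ 2 - α / (α * z - q)
          = -2 * z ^ 2 - t - 1 / (z - lam))
      ∧
      (((α + ε) * (α * z ^ 2 - 2 * q * z) + (q ^ 2 - δ * q - α * γ)) / (α * z - q)
        = -(2 * α₂ + 1) * z - 2 * H + μ / (z - lam)) := by
  intro z hz
  have hzl : z - lam ≠ 0 := sub_ne_zero.mpr hz
  have hα0 : α ≠ 0 := by
    rw [hα]; intro h
    apply hα₂
    have : (2:ℂ) * α₂ = 1 := by linear_combination -h
    field_simp; linear_combination this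
  have hden : α * z - q ≠ 0 := by
    rw [hq]; rw [show α * z - α * lam = α * (z - lam) by ring]
    exact mul_ne_zero hα0 hzl
  constructor
  · have h1 : α / (α * z - q) = 1 / (z - lam) := by
      rw [div_eq_div_iff hden hzl, hq]; ring
    rw [h1]
    field_simp
    subst hγ hδ hε hμ hH hq hα
    ring
  · field_simp
    subst hγ hδ hε hμ hH hq hα
    ring
end

section
/- Let κ₀, κ₁, θ, κ∞, κ ∈ ℂ with κ = (1/4)(κ₀ + κ₁ + θ − 1)² − (1/4)κ∞², and let I ⊆ ℝ be an open interval with 0 ∉ I and 1 ∉ I. Let λ, μ : I → ℂ be differentiable with λ(t) ∉ {0, 1, t} for all t ∈ I, satisfying the Hamiltonian system t(t−1)·λ'(t) = 2λ(λ−1)(λ−t)μ − (κ₀(λ−1)(λ−t) + κ₁λ(λ−t) + (θ−1)λ(λ−1)) and t(t−1)·μ'(t) = −[(3λ² − 2(1+t)λ + t)μ² − (κ₀(2λ−1−t) + κ₁(2λ−t) + (θ−1)(2λ−1))μ + κ] on I. Then λ is twice differentiable and satisfies the sixth Painlevé equation λ'' = (1/2)(1/λ + 1/(λ−1) + 1/(λ−t))(λ')²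 − (1/t + 1/(t−1) + 1/(λ−t))λ' + (λ(λ−1)(λ−t)/(t²(t−1)²))·(α₆ + β₆·t/λ² + γ₆·(t−1)/(λ−1)² + δ₆·t(t−1)/(λ−t)²), where α₆ = κ∞²/2, β₆ = −κ₀²/2, γ₆ = κ₁²/2, δ₆ = (1 − θ²)/2. -/
set_option maxHeartbeats 1600000 in
/-- Algebraic core: the cleared-denominator computation for `P_VI`. -/
lemma PVI_aux (k0 k1 th ki t w L u v M L' M' : ℂ)
    (hw : w = t - 1) (hu : u = L - 1) (hv : v = L - t)
    (ht0 : t ≠ 0) (hw0 : w ≠ 0) (hL0 : L ≠ 0) (hu0 : u ≠ 0) (hv0 : v ≠ 0)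
    (e1 : t * w * L' = 2 * L * u * v * M - (k0 * u * v + k1 * L * v + (th - 1) * L * u))
    (e2 : t * w * M' =
      -((3 * L ^ 2 - 2 * (1 + t) * L + t) * M ^ 2
          - (k0 * (2 * L - 1 - t) + k1 * (2 * L - t) + (th - 1) * (2 * L - 1)) * M
          + (1 / 4 * (k0 + k1 + th - 1) ^ 2 - 1 / 4 * ki ^ 2))) :
    ((((2 * L' * u + 2 * L * L') * v + 2 * L * u * (L' - 1)) * M
        + 2 * L * u * v * M'
        - (k0 * L' * v + k0 * u * (L' - 1) + (k1 * L' * v + k1 * L * (L' - 1))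
            + ((th - 1) * L' * u + (th - 1) * L * L'))) * (t * w)
      - (2 * L * u * v * M - (k0 * u * v + k1 * L * v + (th - 1) * L * u))
        * (1 * w + t * 1)) / (t * w) ^ 2 =
    (1 / 2) * (1 / L + 1 / u + 1 / v) * L' ^ 2
      - (1 / t + 1 / w + 1 / v) * L'
      + (L * u * v / (t ^ 2 * w ^ 2))
        * (ki ^ 2 / 2 + (-(k0 ^ 2) / 2) * t / L ^ 2
            + (k1 ^ 2 / 2) * w / u ^ 2
            + ((1 - th ^ 2) / 2) * t * w / v ^ 2) := by
  have hD0 : (2 * t ^ 2 * w ^ 2 * L ^ 2 * u ^ 2 * v ^ 2 : ℂ) ≠ 0 := by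
    simp [ht0, hw0, hL0, hu0, hv0]
  have h2 : ((((2 * L' * u + 2 * L * L') * v + 2 * L * u * (L' - 1)) * M
        + 2 * L * u * v * M'
        - (k0 * L' * v + k0 * u * (L' - 1) + (k1 * L' * v + k1 * L * (L' - 1))
            + ((th - 1) * L' * u + (th - 1) * L * L'))) * (t * w)
      - (2 * L * u * v * M - (k0 * u * v + k1 * L * v + (th - 1) * L * u))
        * (1 * w + t * 1)) * (2 * L ^ 2 * u ^ 2 * v ^ 2) =
      (t * w) ^ 2 * L' ^ 2 * (u ^ 2 * v ^ 2 * L + L ^ 2 * v ^ 2 * u + L ^ 2 * u ^ 2 * v)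
      - 2 * L' * (t * w ^ 2 * (L ^ 2 * u ^ 2 * v ^ 2) + t ^ 2 * w * (L ^ 2 * u ^ 2 * v ^ 2)
          + t ^ 2 * w ^ 2 * (L ^ 2 * u ^ 2 * v))
      + (L * u * v) * (ki ^ 2 * (L ^ 2 * u ^ 2 * v ^ 2) + -(k0 ^ 2) * t * (u ^ 2 * v ^ 2)
      + k1 ^ 2 * w * (L ^ 2 * v ^ 2) + (1 - th ^ 2) * (t * w) * (L ^ 2 * u ^ 2)) := by
    subst hw hu hv
    linear_combination ((1 : ℂ) * L * t ^ 3 * k0 + (1 : ℂ) * L * L' * t ^ 3 + (-1 : ℂ) * L * L' * t ^ 4 + (-1 : ℂ) * L ^ 2 * t ^ 2 + (1 : ℂ) * L ^ 2 * t ^ 2 * th + (-2 : ℂ) * L ^ 2 * t ^ 2 * k0 + (2 : ℂ) * L ^ 2 * t ^ 3 + (1 : ℂ) * L ^ 2 * t ^ 3 * k1 + (-2 : ℂ) * L ^ 2 * t ^ 3 * k0 + (-3 : ℂ) * L ^ 2 * L' * t ^ 2 + (3 : ℂ) * L ^ 2 * L' * t ^ 4 + (2 : ℂ) * L ^ 2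 * M * t ^ 3 + (3 : ℂ) * L ^ 3 * t + (-1 : ℂ) * L ^ 3 * t * th + (1 : ℂ) * L ^ 3 * t * k0 + (-2 : ℂ) * L ^ 3 * t ^ 2 + (-4 : ℂ) * L ^ 3 * t ^ 2 * th + (-4 : ℂ) * L ^ 3 * t ^ 2 * k1 + (3 : ℂ) * L ^ 3 * t ^ 2 * k0 + (-4 : ℂ) * L ^ 3 * t ^ 3 + (-1 : ℂ) * L ^ 3 * t ^ 3 * k1 + (1 : ℂ) * L ^ 3 * t ^ 3 * k0 + (2 : ℂ) * L ^ 3 * L' * t + (6 : ℂ) * L ^ 3 * L' * t ^ 2 + (-6 : ℂ) * L ^ 3 * L' * t ^ 3 + (-2 : ℂ) * L ^ 3 * L' * t ^ 4 + (-8 : ℂ) * L ^ 3 * M * t ^ 2 + (-8 : ℂ) * L ^ 3 * M * t ^ 3 + (-2 : ℂ) * L ^ 4 + (-5 : ℂ) * L ^ 4 * t + (5 : ℂ) * L ^ 4 * t * th + (5 : ℂ) * L ^ 4 * t * k1 + (7 : ℂ) * L ^ 4 * t ^ 2 + (5 : ℂ) * L ^ 4 * t ^ 2 * th + (5 : ℂ)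 * L ^ 4 * t ^ 2 * k1 + (2 : ℂ) * L ^ 4 * t ^ 3 + (-5 : ℂ) * L ^ 4 * L' * t + (5 : ℂ) * L ^ 4 * L' * t ^ 3 + (10 : ℂ) * L ^ 4 * M * t + (30 : ℂ) * L ^ 4 * M * t ^ 2 + (10 : ℂ) * L ^ 4 * M * t ^ 3 + (5 : ℂ) * L ^ 5 + (-1 : ℂ) * L ^ 5 * th + (-2 : ℂ) * L ^ 5 * k1 + (-1 : ℂ) * L ^ 5 * k0 + (1 : ℂ) * L ^ 5 * t + (-7 : ℂ) * L ^ 5 * t * th + (-7 : ℂ) * L ^ 5 * t * k1 + (-3 : ℂ) * L ^ 5 * t * k0 + (-4 : ℂ) * L ^ 5 * t ^ 2 + (-2 : ℂ) * L ^ 5 * t ^ 2 * th + (-1 : ℂ) * L ^ 5 * t ^ 2 * k1 + (-1 : ℂ) * L ^ 5 * t ^ 2 * k0 + (3 : ℂ) * L ^ 5 * L' * t + (-3 : ℂ) * L ^ 5 * L' * t ^ 2 + (-4 : ℂ) * L ^ 5 * M + (-36 : ℂ) * L ^ 5 * M * t + (-36 : ℂ) * L ^ 5 * M * t ^ 2 +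 (-4 : ℂ) * L ^ 5 * M * t ^ 3 + (-4 : ℂ) * L ^ 6 + (2 : ℂ) * L ^ 6 * th + (3 : ℂ) * L ^ 6 * k1 + (2 : ℂ) * L ^ 6 * k0 + (1 : ℂ) * L ^ 6 * t + (3 : ℂ) * L ^ 6 * t * th + (2 : ℂ) * L ^ 6 * t * k1 + (2 : ℂ) * L ^ 6 * t * k0 + (14 : ℂ) * L ^ 6 * M + (42 : ℂ) * L ^ 6 * M * t + (14 : ℂ) * L ^ 6 * M * t ^ 2 + (1 : ℂ) * L ^ 7 + (-1 : ℂ) * L ^ 7 * th + (-1 : ℂ) * L ^ 7 * k1 + (-1 : ℂ) * L ^ 7 * k0 + (-16 : ℂ) * L ^ 7 * M + (-16 : ℂ) * L ^ 7 * M * t + (6 : ℂ) * L ^ 8 * M) * e1 + ((4 : ℂ) * L ^ 3 * t ^ 3 + (-12 : ℂ) * L ^ 4 * t ^ 2 + (-12 : ℂ) * L ^ 4 * t ^ 3 + (12 : ℂ) * L ^ 5 * t + (36 : ℂ) * L ^ 5 * t ^ 2 + (12 : ℂ) * L ^ 5 * t ^ 3 + (-4 : ℂ) * L ^ 6 + (-36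 : ℂ) * L ^ 6 * t + (-36 : ℂ) * L ^ 6 * t ^ 2 + (-4 : ℂ) * L ^ 6 * t ^ 3 + (12 : ℂ) * L ^ 7 + (36 : ℂ) * L ^ 7 * t + (12 : ℂ) * L ^ 7 * t ^ 2 + (-12 : ℂ) * L ^ 8 + (-12 : ℂ) * L ^ 8 * t + (4 : ℂ) * L ^ 9) * e2
  have hT1 : (1 / 2) * (1 / L + 1 / u + 1 / v) * L' ^ 2 =
      ((u * v + L * v + L * u) * L' ^ 2) / (2 * (L * u * v)) := by
    field_simp
    try left
  have hT2 : (1 / t + 1 / w + 1 / v) * L' =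
      ((w * v + t * v + t * w) * L') / (t * w * v) := by
    field_simp
    try left
  have hS : (ki ^ 2 / 2 + (-(k0 ^ 2) / 2) * t / L ^ 2
            + (k1 ^ 2 / 2) * w / u ^ 2
            + ((1 - th ^ 2) / 2) * t * w / v ^ 2) =
      (ki ^ 2 * (L ^ 2 * u ^ 2 * v ^ 2) + -(k0 ^ 2) * t * (u ^ 2 * v ^ 2)
      + k1 ^ 2 * w * (L ^ 2 * v ^ 2) + (1 - th ^ 2) * (t * w) * (L ^ 2 * u ^ 2)) / (2 * L ^ 2 * u ^ 2 * v ^ 2) := by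
    have hL2 : (2 * L ^ 2 : ℂ) ≠ 0 := by simp [hL0]
    have hu2 : (2 * u ^ 2 : ℂ) ≠ 0 := by simp [hu0]
    have hv2 : (2 * v ^ 2 : ℂ) ≠ 0 := by simp [hv0]
    simp only [div_mul_eq_mul_div, div_div]
    rw [div_add_div _ _ two_ne_zero hL2,
        div_add_div _ _ (mul_ne_zero two_ne_zero hL2) hu2,
        div_add_div _ _ (mul_ne_zero (mul_ne_zero two_ne_zero hL2) hu2) hv2,
        div_eq_div_iff (mul_ne_zero (mul_ne_zero (mul_ne_zero two_ne_zero hL2) hu2) hv2)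
          (by simp [hL0, hu0, hv0] : (2 * L ^ 2 * u ^ 2 * v ^ 2 : ℂ) ≠ 0)]
    ring
  have hX : ((((2 * L' * u + 2 * L * L') * v + 2 * L * u * (L' - 1)) * M
        + 2 * L * u * v * M'
        - (k0 * L' * v + k0 * u * (L' - 1) + (k1 * L' * v + k1 * L * (L' - 1))
            + ((th - 1) * L' * u + (th - 1) * L * L'))) * (t * w)
      - (2 * L * u * v * M - (k0 * u * v + k1 * L * v + (th - 1) * L * u))
        * (1 * w + t * 1)) / (t * w) ^ 2 =
      (((((2 * L' * u + 2 * L * L') * v + 2 * L * u * (L' - 1)) * M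
        + 2 * L * u * v * M'
        - (k0 * L' * v + k0 * u * (L' - 1) + (k1 * L' * v + k1 * L * (L' - 1))
            + ((th - 1) * L' * u + (th - 1) * L * L'))) * (t * w)
      - (2 * L * u * v * M - (k0 * u * v + k1 * L * v + (th - 1) * L * u))
        * (1 * w + t * 1)) * (2 * L ^ 2 * u ^ 2 * v ^ 2)) / (2 * t ^ 2 * w ^ 2 * L ^ 2 * u ^ 2 * v ^ 2) := by
    rw [div_eq_div_iff (pow_ne_zero 2 (mul_ne_zero ht0 hw0)) hD0]
    ring
  rw [hX, h2, hT1, hT2, hS, div_mul_div_comm]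
  rw [div_sub_div _ _ (by simp [hL0, hu0, hv0] : (2 * (L * u * v) : ℂ) ≠ 0)
        (by simp [ht0, hw0, hv0] : (t * w * v : ℂ) ≠ 0),
      div_add_div _ _ (by simp [ht0, hw0, hL0, hu0, hv0] : (2 * (L * u * v) * (t * w * v) : ℂ) ≠ 0)
        (by simp [ht0, hw0, hL0, hu0, hv0] : (t ^ 2 * w ^ 2 * (2 * L ^ 2 * u ^ 2 * v ^ 2) : ℂ) ≠ 0),
      div_eq_div_iff hD0 (by simp [ht0, hw0, hL0, hu0, hv0] :
        (2 * (L * u * v) * (t * w * v) * (t ^ 2 * w ^ 2 * (2 * L ^ 2 * u ^ 2 * v ^ 2)) : ℂ) ≠ 0)]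
  ring


/-- Eliminating `μ` from the `P_VI` Hamiltonian system yields the sixth Painlevé
equation for `λ`. -/
theorem PVI_Hamiltonian_system_to_PVI
    (κ₀ κ₁ θ κinf κ : ℂ)
    (hκ : κ = (1 / 4) * (κ₀ + κ₁ + θ - 1) ^ 2 - (1 / 4) * κinf ^ 2)
    (a b : ℝ) (h0 : (0 : ℝ) ∉ Set.Ioo a b) (h1 : (1 : ℝ) ∉ Set.Ioo a b)
    (l m : ℝ → ℂ)
    (hld : ∀ x ∈ Set.Ioo a b, DifferentiableAt ℝ l x)
    (hmd : ∀ x ∈ Set.Ioo a b, DifferentiableAt ℝ m x)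
    (hl0 : ∀ x ∈ Set.Ioo a b, l x ≠ 0)
    (hl1 : ∀ x ∈ Set.Ioo a b, l x ≠ 1)
    (hlt : ∀ x ∈ Set.Ioo a b, l x ≠ (x : ℂ))
    (hham1 : ∀ x ∈ Set.Ioo a b,
      (x : ℂ) * ((x : ℂ) - 1) * deriv l x =
        2 * l x * (l x - 1) * (l x - (x : ℂ)) * m x
          - (κ₀ * (l x - 1) * (l x - (x : ℂ)) + κ₁ * l x * (l x - (x : ℂ))
              + (θ - 1) * l x * (l x - 1)))
    (hham2 : ∀ x ∈ Set.Ioo a b,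
      (x : ℂ) * ((x : ℂ) - 1) * deriv m x =
        -((3 * l x ^ 2 - 2 * (1 + (x : ℂ)) * l x + (x : ℂ)) * m x ^ 2
            - (κ₀ * (2 * l x - 1 - (x : ℂ)) + κ₁ * (2 * l x - (x : ℂ))
                + (θ - 1) * (2 * l x - 1)) * m x + κ)) :
    ∀ x ∈ Set.Ioo a b,
      DifferentiableAt ℝ (deriv l) x ∧
      deriv (deriv l) x =
        (1 / 2) * (1 / l x + 1 / (l x - 1) + 1 / (l x - (x : ℂ))) * (deriv l x) ^ 2
          - (1 / (x : ℂ) + 1 / ((x : ℂ) - 1) + 1 / (l x - (x : ℂ))) * deriv l x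
          + (l x * (l x - 1) * (l x - (x : ℂ)) / ((x : ℂ) ^ 2 * ((x : ℂ) - 1) ^ 2))
            * (κinf ^ 2 / 2 + (-(κ₀ ^ 2) / 2) * (x : ℂ) / l x ^ 2
                + (κ₁ ^ 2 / 2) * ((x : ℂ) - 1) / (l x - 1) ^ 2
                + ((1 - θ ^ 2) / 2) * (x : ℂ) * ((x : ℂ) - 1) / (l x - (x : ℂ)) ^ 2) := by
  subst hκ
  intro x hx
  -- nonvanishing facts at a point y of the interval
  have key : ∀ y ∈ Set.Ioo a b, ((y : ℂ) ≠ 0 ∧ (y : ℂ) - 1 ≠ 0) := by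
    intro y hy
    have hy0 : y ≠ 0 := fun h => h0 (h ▸ hy)
    have hy1 : y ≠ 1 := fun h => h1 (h ▸ hy)
    exact ⟨by exact_mod_cast hy0, sub_ne_zero.mpr (by exact_mod_cast hy1)⟩
  obtain ⟨hx0, hx1⟩ := key x hx
  have hd0 : (x : ℂ) * ((x : ℂ) - 1) ≠ 0 := mul_ne_zero hx0 hx1
  set F : ℝ → ℂ := fun y =>
    (2 * l y * (l y - 1) * (l y - (y : ℂ)) * m y
      - (κ₀ * (l y - 1) * (l y - (y : ℂ)) + κ₁ * l y * (l y - (y : ℂ))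
          + (θ - 1) * l y * (l y - 1))) / ((y : ℂ) * ((y : ℂ) - 1)) with hF_def
  have heq : ∀ y ∈ Set.Ioo a b, deriv l y = F y := by
    intro y hy
    obtain ⟨hy0, hy1⟩ := key y hy
    rw [hF_def]
    rw [eq_div_iff (mul_ne_zero hy0 hy1)]
    linear_combination hham1 y hy
  have hev : deriv l =ᶠ[nhds x] F :=
    Filter.eventuallyEq_of_mem (isOpen_Ioo.mem_nhds hx) heq
  -- derivative of F at x
  have hc : HasDerivAt (fun y : ℝ => (y : ℂ)) 1 x := by
    simpa using (hasDerivAt_id x).ofReal_comp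
  have hL := (hld x hx).hasDerivAt
  have hM := (hmd x hx).hasDerivAt
  have hLm1 : HasDerivAt (fun y => l y - 1) (deriv l x) x := hL.sub_const 1
  have hLmt : HasDerivAt (fun y => l y - (y : ℂ)) (deriv l x - 1) x := hL.sub hc
  have hP1 := (hL.const_mul 2).mul hLm1
  have hP2 := hP1.mul hLmt
  have hP3 := hP2.mul hM
  have hB1 := (hLm1.const_mul κ₀).mul hLmt
  have hB2 := (hL.const_mul κ₁).mul hLmt
  have hB3 := (hL.const_mul (θ - 1)).mul hLm1
  have hN := hP3.sub ((hB1.add hB2).add hB3)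
  have hD : HasDerivAt (fun y : ℝ => (y : ℂ) * ((y : ℂ) - 1))
      (1 * ((x : ℂ) - 1) + (x : ℂ) * 1) x := hc.mul (hc.sub_const 1)
  have hF : HasDerivAt F _ x := hN.div hD hd0
  constructor
  · exact hev.differentiableAt_iff.mpr hF.differentiableAt
  · rw [hev.deriv_eq, hF.deriv]
    exact PVI_aux κ₀ κ₁ θ κinf (x : ℂ) ((x : ℂ) - 1) (l x) (l x - 1) (l x - (x : ℂ))
      (m x) (deriv l x) (deriv m x) rfl rfl rfl hx0 hx1 (hl0 x hx)
      (sub_ne_zero.mpr (hl1 x hx)) (sub_ne_zero.mpr (hlt x hx)) (hham1 x hx) (hham2 x hx)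
end
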